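/- Let M ⊆ Fin n × Fin n be a set of edges such that any two distinct edges (i,j) and (i',j') of M satisfy ⌊i/2⌋ ≠ ⌊i'/2⌋ and ⌊j/2⌋ ≠ ⌊j'/2⌋ (indices taken as natural numbers). Then there exists a subset S ⊆ M whose edges pairwise do not overlap (in particular S is a consecutive matching) such that 3·|S| ≥ |M|. -/
import Mathlib


/-- Two edges `(i,j)` and `(i',j')` of the bipartite graph overlap if
`|i - i'| ≤ 1` or `|j - j'| ≤ 1`. -/
def Overlap {n : ℕ} (e e' : Fin n × Fin n) : Prop :=
  ((e.1.val : ℤ) - e'.1.val).natAbs ≤ 1 ∨ ((e.2.val : ℤ) - e'.2.val).natAbs ≤ 1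

instance {n : ℕ} (e e' : Fin n × Fin n) : Decidable (Overlap e e') := by
  unfold Overlap; infer_instance

/-- `M` is a consecutive matching in `E`. -/
def ConsecMatching {n : ℕ} (E M : Finset (Fin n × Fin n)) : Prop :=
  M ⊆ E ∧
  (∀ e ∈ M, ∀ e' ∈ M, e ≠ e' → e.1 ≠ e'.1 ∧ e.2 ≠ e'.2) ∧
  (∀ e ∈ M, ∀ e' ∈ M, e'.1.val = e.1.val + 1 → e'.2.val = e.2.val + 1) ∧
  (∀ e ∈ M, ∀ e' ∈ M, e'.2.val = e.2.val + 1 → e'.1.val = e.1.val + 1)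

/-- `s` is the run of `ℓ` consecutive edges at `(p, q)`,
i.e. `s = {(p+r, q+r) : 0 ≤ r < ℓ}`. -/
def IsRunAt {n : ℕ} (s : Finset (Fin n × Fin n)) (p q ℓ : ℕ) : Prop :=
  p + ℓ ≤ n ∧ q + ℓ ≤ n ∧
  ∀ e : Fin n × Fin n, e ∈ s ↔ ∃ r < ℓ, e.1.val = p + r ∧ e.2.val = q + r

/-- `s` is a run of `ℓ` consecutive edges. -/
def IsRun {n : ℕ} (s : Finset (Fin n × Fin n)) (ℓ : ℕ) : Prop :=
  ∃ p q, IsRunAt s p q ℓ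

/-- `E` contains no run of `k` consecutive edges. -/
def NoRun {n : ℕ} (E : Finset (Fin n × Fin n)) (k : ℕ) : Prop :=
  ¬ ∃ s : Finset (Fin n × Fin n), IsRun s k ∧ s ⊆ E

/-- `s` is a streak of `M`: a run of (at least one) consecutive edges contained in `M`,
maximal under inclusion among runs contained in `M`. -/
def IsStreak {n : ℕ} (M s : Finset (Fin n × Fin n)) : Prop :=
  (∃ ℓ, 1 ≤ ℓ ∧ IsRun s ℓ) ∧ s ⊆ M ∧
  ∀ s' ℓ', IsRun s' ℓ' → s' ⊆ M → s ⊆ s' → s' = s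

/-- `s 0, …, s (m-1)` is a greedy sequence in `E` with threshold `k`:
each `s i` is a run of at least `k` consecutive edges, all of whose edges
overlap no edge of the previously chosen runs, and no run of consecutive
edges all still available at step `i` is longer than `s i`. -/
def GreedySeq {n : ℕ} (E : Finset (Fin n × Fin n)) (k m : ℕ)
    (s : ℕ → Finset (Fin n × Fin n)) : Prop :=
  ∀ i < m,
    s i ⊆ E.filter (fun e => ∀ j < i, ∀ e' ∈ s j, ¬ Overlap e e') ∧
    (∃ ℓ, k ≤ ℓ ∧ IsRun (s i) ℓ) ∧
    (∀ r ℓ, IsRun r ℓ →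
      r ⊆ E.filter (fun e => ∀ j < i, ∀ e' ∈ s j, ¬ Overlap e e') →
      ℓ ≤ (s i).card)

/-- `M` is a `t`-locally-optimal consecutive matching in `E`. -/
def LocallyOptimal {n : ℕ} (E M : Finset (Fin n × Fin n)) (t : ℕ) : Prop :=
  ConsecMatching E M ∧
  ¬ ∃ Erem Eadd : Finset (Fin n × Fin n), Erem ⊆ M ∧ Eadd ⊆ E \ M ∧
      Erem.card < Eadd.card ∧ Eadd.card ≤ t ∧
      ConsecMatching E ((M \ Erem) ∪ Eadd)

lemma overlap_symm {n : ℕ} {e e' : Fin n × Fin n} (h : Overlap e e') : Overlap e' e := by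
  unfold Overlap at *; omega

lemma overlap_self {n : ℕ} (e : Fin n × Fin n) : Overlap e e := by
  unfold Overlap; omega

lemma third_key {n : ℕ} : ∀ N : ℕ, ∀ M : Finset (Fin n × Fin n), M.card ≤ N →
    (∀ e ∈ M, ∀ e' ∈ M, e ≠ e' →
      e.1.val / 2 ≠ e'.1.val / 2 ∧ e.2.val / 2 ≠ e'.2.val / 2) →
    ∃ S ⊆ M, (∀ e ∈ S, ∀ e' ∈ S, e ≠ e' → ¬ Overlap e e') ∧ 3 * S.card ≥ M.card := by
  intro N
  induction N with
  | zero =>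
    intro M hc _
    exact ⟨∅, Finset.empty_subset _, by simp, by simpa using hc⟩
  | succ N ih =>
    intro M hc hM
    rcases M.eq_empty_or_nonempty with rfl | ⟨e, he⟩
    · exact ⟨∅, Finset.empty_subset _, by simp, by simp⟩
    · set M' := M.filter (fun f => ¬ Overlap f e) with hM'def
      set R := M.filter (fun f => Overlap f e) with hRdef
      have hcard : R.card + M'.card = M.card := by
        rw [hRdef, hM'def]
        exact Finset.card_filter_add_card_filter_not _
      -- R has at most 3 elements
      set A := M.filter (fun f => f ≠ e ∧ ((f.1.val : ℤ) - e.1.val).natAbs ≤ 1) with hAdef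
      set B := M.filter (fun f => f ≠ e ∧ ((f.2.val : ℤ) - e.2.val).natAbs ≤ 1) with hBdef
      have hA1 : A.card ≤ 1 := by
        rw [Finset.card_le_one]
        intro f hf g hg
        rw [hAdef, Finset.mem_filter] at hf hg
        obtain ⟨hfM, hfne, hf1⟩ := hf
        obtain ⟨hgM, hgne, hg1⟩ := hg
        have hfh := (hM f hfM e he hfne).1
        have hgh := (hM g hgM e he hgne).1
        have : f.1.val = g.1.val := by omega
        by_contra hne
        exact (hM f hfM g hgM hne).1 (by omega)
      have hB1 : B.card ≤ 1 := by
        rw [Finset.card_le_one]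
        intro f hf g hg
        rw [hBdef, Finset.mem_filter] at hf hg
        obtain ⟨hfM, hfne, hf1⟩ := hf
        obtain ⟨hgM, hgne, hg1⟩ := hg
        have hfh := (hM f hfM e he hfne).2
        have hgh := (hM g hgM e he hgne).2
        have : f.2.val = g.2.val := by omega
        by_contra hne
        exact (hM f hfM g hgM hne).2 (by omega)
      have hRsub : R ⊆ insert e (A ∪ B) := by
        intro f hf
        rw [hRdef, Finset.mem_filter] at hf
        obtain ⟨hfM, hfo⟩ := hf
        by_cases hfe : f = e
        · simp [hfe]
        · rw [Finset.mem_insert, Finset.mem_union, hAdef, hBdef,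
            Finset.mem_filter, Finset.mem_filter]
          rcases hfo with h | h
          · exact Or.inr (Or.inl ⟨hfM, hfe, h⟩)
          · exact Or.inr (Or.inr ⟨hfM, hfe, h⟩)
      have hR3 : R.card ≤ 3 := by
        calc R.card ≤ (insert e (A ∪ B)).card := Finset.card_le_card hRsub
          _ ≤ (A ∪ B).card + 1 := Finset.card_insert_le _ _
          _ ≤ (A.card + B.card) + 1 := by
              have := Finset.card_union_le A B; omega
          _ ≤ 3 := by omega
      have heR : e ∈ R := by
        rw [hRdef, Finset.mem_filter]; exact ⟨he, overlap_self e⟩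
      have hRpos : 1 ≤ R.card := Finset.card_pos.mpr ⟨e, heR⟩
      have hM'sub : M' ⊆ M := Finset.filter_subset _ _
      have hM'card : M'.card ≤ N := by omega
      obtain ⟨S', hS'sub, hS'no, hS'card⟩ := ih M' hM'card
        (fun a ha b hb hab => hM a (hM'sub ha) b (hM'sub hb) hab)
      refine ⟨insert e S', ?_, ?_, ?_⟩
      · intro f hf
        rcases Finset.mem_insert.mp hf with rfl | hf
        · exact he
        · exact hM'sub (hS'sub hf)
      · intro f hf g hg hfg
        rw [Finset.mem_insert] at hf hg
        rcases hf with hf | hf <;> rcases hg with hg | hg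
        · exact absurd (hf.trans hg.symm) hfg
        · subst hf
          intro hov
          have h := hS'sub hg
          rw [hM'def, Finset.mem_filter] at h
          exact h.2 (overlap_symm hov)
        · subst hg
          intro hov
          have h := hS'sub hf
          rw [hM'def, Finset.mem_filter] at h
          exact h.2 hov
        · exact hS'no f hf g hg hfg
      · have heS' : e ∉ S' := by
          intro h
          have := hS'sub h
          rw [hM'def, Finset.mem_filter] at this
          exact this.2 (overlap_self e)
        rw [Finset.card_insert_of_notMem heS']
        omega

/-- if distinct edges of `M` land in distinct merged pairs on both
sides, then `M` has a subset `S` of pairwise non-overlapping edges (in particular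
`S` is a consecutive matching in `M`) with `3|S| ≥ |M|`. -/
theorem third_of_merged_matching {n : ℕ} (hn : 1 ≤ n)
    (M : Finset (Fin n × Fin n))
    (hM : ∀ e ∈ M, ∀ e' ∈ M, e ≠ e' →
      e.1.val / 2 ≠ e'.1.val / 2 ∧ e.2.val / 2 ≠ e'.2.val / 2) :
    ∃ S ⊆ M, (∀ e ∈ S, ∀ e' ∈ S, e ≠ e' → ¬ Overlap e e') ∧
      ConsecMatching M S ∧ 3 * S.card ≥ M.card := by
  obtain ⟨S, hSsub, hSno, hScard⟩ := third_key M.card M le_rfl hM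
  refine ⟨S, hSsub, hSno, ⟨hSsub, ?_, ?_, ?_⟩, hScard⟩
  · intro e he e' he' hne
    have h := hSno e he e' he' hne
    unfold Overlap at h
    push_neg at h
    exact ⟨fun hh => by omega, fun hh => by
      have : e.2.val = e'.2.val := congrArg Fin.val hh
      omega⟩
  · intro e he e' he' h1
    by_cases hne : e = e'
    · subst hne; omega
    · have h := hSno e he e' he' hne
      unfold Overlap at h
      exact absurd (Or.inl (by omega)) h
  · intro e he e' he' h2
    by_cases hne : e = e'
    · subst hne; omega
    · have h := hSno e he e' he' hne
      unfold Overlap at h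
      exact absurd (Or.inr (by omega)) h
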